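/- Let n ≥ 2 and let X ∈ M_n(ℂ) be nilpotent but not regular, i.e., X^{n−1} = 0. Then there exists a diagonalizable matrix Z ∈ M_n(ℂ) with Z ≠ 0, trace(Z) = 0, and XZ = ZX. In particular Z is a nonzero semisimple element of 𝔰𝔩_n(ℂ) commuting with X (equivalently, a non-central semisimple element of 𝔤𝔩_n(ℂ) commuting with X). -/

import Mathlib

set_option maxHeartbeats 1000000
open Matrix Finset

/-- A matrix is diagonalizable (semisimple) if it is similar to a diagonal matrix. -/
def Matrix.IsDiagonalizable {n : ℕ} (A : Matrix (Fin n) (Fin n) ℂ) : Prop :=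
  ∃ P : Matrix (Fin n) (Fin n) ℂ, IsUnit P.det ∧ (P⁻¹ * A * P).IsDiag



lemma aux_diag {n : ℕ} (M : Matrix (Fin n) (Fin n) ℂ) (hM : M * M = M) (a c : ℂ) :
    ∃ P : Matrix (Fin n) (Fin n) ℂ, IsUnit P.det ∧ (P⁻¹ * (a • M + c • 1) * P).IsDiag := by
  classical
  set f : (Fin n → ℂ) →ₗ[ℂ] (Fin n → ℂ) := M.mulVecLin with hf
  have hff : ∀ x, f (f x) = f x := by
    intro x
    simp only [hf, mulVecLin_apply, mulVec_mulVec, hM]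
  have hproj : LinearMap.IsProj (LinearMap.range f) f :=
    ⟨fun x => ⟨x, rfl⟩, fun x hx => by obtain ⟨y, rfl⟩ := hx; exact hff y⟩
  have hcompl : IsCompl (LinearMap.range f) (LinearMap.ker f) := hproj.isCompl
  set p := LinearMap.range f
  set q := LinearMap.ker f
  let bp : Module.Basis (Fin (Module.finrank ℂ p)) ℂ p := Module.finBasis ℂ p
  let bq : Module.Basis (Fin (Module.finrank ℂ q)) ℂ q := Module.finBasis ℂ q
  let b0 := (bp.prod bq).map (Submodule.prodEquivOfIsCompl p q hcompl)
  let cf : (Fin (Module.finrank ℂ p) ⊕ Fin (Module.finrank ℂ q)) → ℂ :=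
    Sum.elim (fun _ => 1) (fun _ => 0)
  have key0 : ∀ i, M.mulVec (b0 i) = cf i • b0 i := by
    intro i
    have hb0 : b0 i = Submodule.prodEquivOfIsCompl p q hcompl ((bp.prod bq) i) := rfl
    cases i with
    | inl i =>
        have : b0 (Sum.inl i) = (bp i : Fin n → ℂ) := by
          rw [hb0, Module.Basis.prod_apply]
          simp [Submodule.coe_prodEquivOfIsCompl']
        rw [this]
        have := hproj.2 (bp i : Fin n → ℂ) (bp i).2
        simpa [cf, hf] using this
    | inr i =>
        have : b0 (Sum.inr i) = (bq i : Fin n → ℂ) := by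
          rw [hb0, Module.Basis.prod_apply]
          simp [Submodule.coe_prodEquivOfIsCompl']
        rw [this]
        have := (bq i).2
        simp only [q, LinearMap.mem_ker, hf, mulVecLin_apply] at this
        simpa [cf] using this
  let e := b0.indexEquiv (Pi.basisFun ℂ (Fin n))
  let b := b0.reindex e
  have key : ∀ j, M.mulVec (b j) = cf (e.symm j) • b j := by
    intro j; simpa [b, Module.Basis.reindex_apply] using key0 (e.symm j)
  let Pc := (Pi.basisFun ℂ (Fin n)).toMatrix ⇑b
  have : Invertible Pc := (Pi.basisFun ℂ (Fin n)).invertibleToMatrix b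
  have hdet : IsUnit Pc.det := Matrix.isUnit_det_of_invertible Pc
  have hPc : ∀ i j, Pc i j = b j i := by
    intro i j; simp [Pc, Module.Basis.toMatrix_apply]
  refine ⟨Pc, hdet, ?_⟩
  have hZP : (a • M + c • 1) * Pc = Pc * diagonal (fun j => a * cf (e.symm j) + c) := by
    ext i j
    rw [Matrix.mul_diagonal, Matrix.mul_apply]
    have : ∀ x, (a • M + c • (1 : Matrix (Fin n) (Fin n) ℂ)) i x * Pc x j
        = (a • M) i x * b j x + (c • (1 : Matrix (Fin n) (Fin n) ℂ)) i x * b j x := by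
      intro x; rw [hPc]; ring_nf; simp [add_mul, Matrix.add_apply]; ring
    rw [Finset.sum_congr rfl (fun x _ => this x), Finset.sum_add_distrib]
    have h1 : ∑ x, (a • M) i x * b j x = a * (M.mulVec (b j) i) := by
      simp [Matrix.mulVec, dotProduct, Finset.mul_sum, mul_assoc]
    have h2 : ∑ x, (c • (1 : Matrix (Fin n) (Fin n) ℂ)) i x * b j x = c * b j i := by
      simp [Matrix.one_apply, Finset.sum_ite_eq' , mul_comm]
    rw [h1, h2, key j, hPc]
    simp [Pi.smul_apply, smul_eq_mul]; ring
  rw [Matrix.mul_assoc, hZP, ← Matrix.mul_assoc, Matrix.nonsing_inv_mul _ hdet, Matrix.one_mul]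
  exact Matrix.isDiag_diagonal _


variable {n : ℕ}

lemma sum_mulVec' {ι : Type*} (s : Finset ι) (f : ι → Matrix (Fin n) (Fin n) ℂ)
    (v : Fin n → ℂ) : (∑ i ∈ s, f i) *ᵥ v = ∑ i ∈ s, f i *ᵥ v := by
  ext i
  simp only [Matrix.mulVec, dotProduct, Finset.sum_apply, Matrix.sum_apply, Finset.sum_mul]
  exact Finset.sum_comm

lemma EME (l0 j : Fin n) (c : ℂ) (M : Matrix (Fin n) (Fin n) ℂ) :
    single l0 j c * M * single l0 j c
      = (c * M j l0) • single l0 j c := by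
  ext i i'
  rw [Matrix.smul_apply]
  by_cases h2 : i' = j
  · subst h2
    rw [Matrix.mul_single_apply_same]
    by_cases h1 : i = l0
    · subst h1
      rw [Matrix.single_mul_apply_same, Matrix.single_apply_same]
      simp only [smul_eq_mul]
    · rw [Matrix.single_mul_apply_of_ne _ _ _ _ _ h1, zero_mul, smul_eq_mul,
        Matrix.single_apply_of_ne _ _ _ _ _ (by tauto)]
      simp
  · rw [Matrix.mul_single_apply_of_ne _ _ _ _ _ h2, smul_eq_mul,
      Matrix.single_apply_of_ne _ _ _ _ _ (by tauto)]
    simp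

lemma EmulVec (l0 j : Fin n) (c : ℂ) (y : Fin n → ℂ) :
    (single l0 j c) *ᵥ y = (c * y j) • (Pi.single l0 (1:ℂ) : Fin n → ℂ) := by
  ext i
  simp only [Matrix.mulVec, dotProduct, Matrix.single, Matrix.of_apply,
    ite_mul, zero_mul, Pi.smul_apply, Pi.single_apply, smul_eq_mul]
  by_cases h1 : i = l0
  · subst h1
    simp only [true_and, if_true, eq_self_iff_true]
    rw [Finset.sum_ite_eq Finset.univ j (fun x => c * y x)]
    simp [mul_comm]
  · simp [h1, Ne.symm h1]


variable {n : ℕ}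

section Main

variable (X : Matrix (Fin n) (Fin n) ℂ) (l : ℕ) (l0 j : Fin n)

noncomputable def Emat : Matrix (Fin n) (Fin n) ℂ := single l0 j (((X ^ l) j l0)⁻¹)

noncomputable def Pmat : Matrix (Fin n) (Fin n) ℂ :=
  ∑ i ∈ Finset.range (l + 1), X ^ i * Emat X l l0 j * X ^ (l - i)

noncomputable def sco (a : ℕ) : ℂ := ((X ^ l) j l0)⁻¹ * (X ^ a) j l0

noncomputable def qmat : Matrix (Fin n) (Fin n) ℂ :=
  ∑ m ∈ Finset.range (l + 1), sco X l l0 j (l - m) • X ^ m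

lemma Xpow_zero_of_ge (hXl1 : X ^ (l + 1) = 0) {a : ℕ} (ha : l + 1 ≤ a) : X ^ a = 0 := by
  have : X ^ a = X ^ (l + 1) * X ^ (a - (l + 1)) := by
    rw [← pow_add]; congr 1; omega
  rw [this, hXl1, Matrix.zero_mul]

lemma sco_zero_of_gt (hXl1 : X ^ (l + 1) = 0) {a : ℕ} (ha : l < a) : sco X l l0 j a = 0 := by
  rw [sco, Xpow_zero_of_ge X l hXl1 (a := a) (by omega)]
  simp

-- Claim A
lemma claimA (hXl1 : X ^ (l + 1) = 0) : X * Pmat X l l0 j = Pmat X l l0 j * X := by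
  have key : ∀ fn : ℕ → Matrix (Fin n) (Fin n) ℂ,
      (fn = fun i => X ^ i * Emat X l l0 j * X ^ (l + 1 - i)) →
      ∑ i ∈ Finset.range (l + 2), fn i = X * Pmat X l l0 j ∧
      ∑ i ∈ Finset.range (l + 2), fn i = Pmat X l l0 j * X := by
    intro fn hfn
    constructor
    · rw [Finset.sum_range_succ']
      simp only [hfn]
      have h0 : X ^ 0 * Emat X l l0 j * X ^ (l + 1 - 0) = 0 := by
        rw [pow_zero, Matrix.one_mul, Nat.sub_zero, hXl1, Matrix.mul_zero]
      rw [h0, add_zero, Pmat, Finset.mul_sum]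
      refine Finset.sum_congr rfl fun i hi => ?_
      rw [Finset.mem_range] at hi
      rw [show l + 1 - (i + 1) = l - i by omega, pow_succ']
      noncomm_ring
    · rw [Finset.sum_range_succ]
      simp only [hfn]
      have h0 : X ^ (l + 1) * Emat X l l0 j * X ^ (l + 1 - (l + 1)) = 0 := by
        rw [hXl1, Matrix.zero_mul, Matrix.zero_mul]
      rw [h0, add_zero, Pmat, Finset.sum_mul]
      refine Finset.sum_congr rfl fun i hi => ?_
      rw [Finset.mem_range] at hi
      rw [show l + 1 - i = (l - i) + 1 by omega, pow_succ]
      noncomm_ring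
  obtain ⟨h1, h2⟩ := key _ rfl
  rw [← h1, h2]

-- Claim B
lemma claimB (hXl1 : X ^ (l + 1) = 0) :
    Pmat X l l0 j * Pmat X l l0 j = qmat X l l0 j * Pmat X l l0 j := by
  have hEME : ∀ a : ℕ, Emat X l l0 j * X ^ a * Emat X l l0 j
      = sco X l l0 j a • Emat X l l0 j := by
    intro a; rw [Emat, EME, sco]
  rw [Pmat, qmat, Finset.sum_mul, Finset.sum_mul]
  simp only [Finset.mul_sum]
  rw [Finset.sum_comm]
  conv_rhs => rw [Finset.sum_comm]
  refine Finset.sum_congr rfl fun i' hi' => ?_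
  rw [Finset.mem_range] at hi'
  -- LHS inner: ∑ i, (X^i * E * X^(l-i)) * (X^i' * E * X^(l-i'))
  have lhs_eq : ∀ i, (X ^ i * Emat X l l0 j * X ^ (l - i)) * (X ^ i' * Emat X l l0 j * X ^ (l - i'))
      = sco X l l0 j ((l - i) + i') • (X ^ i * Emat X l l0 j * X ^ (l - i')) := by
    intro i
    have : X ^ (l - i) * X ^ i' = X ^ ((l - i) + i') := (pow_add X _ _).symm
    calc (X ^ i * Emat X l l0 j * X ^ (l - i)) * (X ^ i' * Emat X l l0 j * X ^ (l - i'))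
        = X ^ i * (Emat X l l0 j * (X ^ (l - i) * X ^ i') * Emat X l l0 j) * X ^ (l - i') := by
          noncomm_ring
      _ = X ^ i * (sco X l l0 j ((l - i) + i') • Emat X l l0 j) * X ^ (l - i') := by
          rw [this, hEME]
      _ = sco X l l0 j ((l - i) + i') • (X ^ i * Emat X l l0 j * X ^ (l - i')) := by
          rw [Matrix.mul_smul, Matrix.smul_mul]
  have rhs_eq : ∀ m, (sco X l l0 j (l - m) • X ^ m) * (X ^ i' * Emat X l l0 j * X ^ (l - i'))
      = sco X l l0 j (l - m) • (X ^ (m + i') * Emat X l l0 j * X ^ (l - i')) := by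
    intro m
    rw [Matrix.smul_mul, pow_add]
    congr 1
    noncomm_ring
  rw [Finset.sum_congr rfl fun i _ => lhs_eq i, Finset.sum_congr rfl fun m _ => rhs_eq m]
  -- both sides equal sum over range (l+1-i')
  have hC : ∀ fn : ℕ → Matrix (Fin n) (Fin n) ℂ,
      (fn = fun m => sco X l l0 j (l - m) • (X ^ (m + i') * Emat X l l0 j * X ^ (l - i'))) →
      (∑ i ∈ Finset.range (l + 1), sco X l l0 j ((l - i) + i') • (X ^ i * Emat X l l0 j * X ^ (l - i'))
        = ∑ m ∈ Finset.range (l + 1 - i'), fn m) ∧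
      (∑ m ∈ Finset.range (l + 1), fn m = ∑ m ∈ Finset.range (l + 1 - i'), fn m) := by
    intro fn hfn
    constructor
    · -- LHS: drop i < i' (coeff zero), reindex i = m + i'
      rw [show Finset.range (l + 1) = Finset.Ico 0 (l + 1) by rw [Nat.Ico_zero_eq_range],
        ← Finset.sum_Ico_consecutive _ (Nat.zero_le i') (by omega : i' ≤ l + 1)]
      have hz : ∑ i ∈ Finset.Ico 0 i', sco X l l0 j ((l - i) + i') • (X ^ i * Emat X l l0 j * X ^ (l - i')) = 0 := by
        refine Finset.sum_eq_zero fun i hi => ?_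
        rw [Finset.mem_Ico] at hi
        rw [sco_zero_of_gt X l l0 j hXl1 (by omega), zero_smul]
      rw [hz, zero_add, Finset.sum_Ico_eq_sum_range]
      refine Finset.sum_congr rfl fun m hm => ?_
      rw [Finset.mem_range] at hm
      simp only [hfn]
      rw [show (l - (i' + m)) + i' = l - m by omega, show i' + m = m + i' by omega]
    · -- RHS: extra terms m ≥ l+1-i' vanish since X^(m+i') = 0
      rw [eq_comm]
      refine Finset.sum_subset (Finset.range_subset_range.2 (by omega)) fun m hm hnot => ?_
      rw [Finset.mem_range] at hm
      rw [Finset.mem_range, not_lt] at hnot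
      simp only [hfn]
      rw [Xpow_zero_of_ge X l hXl1 (a := m + i') (by omega), Matrix.zero_mul, Matrix.zero_mul, smul_zero]
  obtain ⟨h1, h2⟩ := hC _ rfl
  rw [h1, h2]

end Main


theorem stmt_11 (n : ℕ) (hn : 2 ≤ n) (X : Matrix (Fin n) (Fin n) ℂ)
    (hXnil : X ^ (n - 1) = 0) :
    ∃ Z : Matrix (Fin n) (Fin n) ℂ, Z.IsDiagonalizable ∧ Z ≠ 0 ∧ Z.trace = 0 ∧
      X * Z = Z * X := by
  classical
  have hn0 : 0 < n := by omega
  have i0 : Fin n := ⟨0, by omega⟩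
  have hone : (1 : Matrix (Fin n) (Fin n) ℂ) ≠ 0 := by
    intro h
    have := congrFun (congrFun h i0) i0
    simp [Matrix.one_apply] at this
  have hex : ∃ m, X ^ m = 0 := ⟨n - 1, hXnil⟩
  set k := Nat.find hex with hk
  have hk0 : X ^ k = 0 := Nat.find_spec hex
  have hk_le : k ≤ n - 1 := Nat.find_le hXnil
  have hk_pos : 1 ≤ k := by
    by_contra h
    push_neg at h
    interval_cases k
    · rw [pow_zero] at hk0; exact hone hk0
  set l := k - 1 with hldef
  have hkl : k = l + 1 := by omega
  have hXl : X ^ l ≠ 0 := Nat.find_min hex (by omega)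
  have hXl1 : X ^ (l + 1) = 0 := by rw [← hkl]; exact hk0
  have hln : l ≤ n - 2 := by omega
  obtain ⟨j, l0, hα⟩ : ∃ j l0, (X ^ l) j l0 ≠ 0 := by
    by_contra h
    push_neg at h
    exact hXl (by ext i i'; simpa using h i i')
  -- notation
  set E := Emat X l l0 j with hE
  set P := Pmat X l l0 j with hP
  set q := qmat X l l0 j with hq
  have hsco_l : sco X l l0 j l = 1 := inv_mul_cancel₀ hα
  -- q is a unit
  have hq_unit : IsUnit q := by
    have hq_eq : q = (∑ m ∈ Finset.range l, sco X l l0 j (l - (m + 1)) • X ^ (m + 1)) + 1 := by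
      rw [hq, qmat, Finset.sum_range_succ']
      congr 1
      rw [Nat.sub_zero, hsco_l, pow_zero, one_smul]
    rw [hq_eq]
    refine IsNilpotent.isUnit_add_one (Commute.isNilpotent_sum (fun m _ => ?_) (fun m m' _ _ => ?_))
    · refine IsNilpotent.smul ⟨l + 1, ?_⟩ _
      rw [← pow_mul]
      exact Xpow_zero_of_ge X l hXl1 (by nlinarith)
    · exact (((Commute.refl X).pow_pow (m + 1) (m' + 1)).smul_left _).smul_right _
  obtain ⟨u, hu⟩ := hq_unit
  set qi : Matrix (Fin n) (Fin n) ℂ := ↑u⁻¹ with hqi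
  have hqiq : qi * q = 1 := by rw [hqi, ← hu]; exact u.inv_mul
  have hqqi : q * qi = 1 := by rw [hqi, ← hu]; exact u.mul_inv
  -- commutation
  have hXP : X * P = P * X := claimA X l l0 j hXl1
  have hPP : P * P = q * P := claimB X l l0 j hXl1
  have hcXq : Commute X q := by
    rw [hq, qmat]
    exact Commute.sum_right _ _ _ (fun m _ => ((Commute.refl X).pow_right m).smul_right _)
  have hcXqi : Commute X qi := by
    have : Commute X (↑u : Matrix (Fin n) (Fin n) ℂ) := by rw [hu]; exact hcXq
    exact this.units_inv_right
  have hcPX : Commute P X := hXP.symm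
  have hcPq : Commute P q := by
    rw [hq, qmat]
    exact Commute.sum_right _ _ _
      (fun m _ => ((hcPX.pow_right m).smul_right _))
  have hcPqi : Commute P qi := by
    have : Commute P (↑u : Matrix (Fin n) (Fin n) ℂ) := by rw [hu]; exact hcPq
    exact this.units_inv_right
  set P' := qi * P with hP'
  have idem : P' * P' = P' := by
    calc (qi * P) * (qi * P) = qi * ((P * qi) * P) := by
          rw [mul_assoc, ← mul_assoc P qi P]
      _ = qi * ((qi * P) * P) := by rw [hcPqi.eq]
      _ = qi * (qi * (P * P)) := by rw [mul_assoc]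
      _ = qi * ((qi * q) * P) := by rw [hPP, mul_assoc qi q P]
      _ = qi * P := by rw [hqiq, one_mul]
  have hXP' : X * P' = P' * X := by
    calc X * (qi * P) = (X * qi) * P := by rw [mul_assoc]
      _ = qi * (X * P) := by rw [hcXqi.eq, mul_assoc]
      _ = (qi * P) * X := by rw [hXP, mul_assoc]
  -- the eigenvector u0
  set u0 : Fin n → ℂ := fun i => (X ^ l) i l0 with hu0def
  have hu0ne : u0 ≠ 0 := by
    intro h
    exact hα (by simpa [hu0def] using congrFun h j)
  have hMu0 : ∀ M : Matrix (Fin n) (Fin n) ℂ, M *ᵥ u0 = fun i => (M * X ^ l) i l0 := by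
    intro M
    ext i
    simp [hu0def, Matrix.mulVec, dotProduct, Matrix.mul_apply]
  have hXau0 : ∀ a : ℕ, X ^ a *ᵥ u0 = fun i => (X ^ (a + l)) i l0 := by
    intro a
    rw [hMu0, ← pow_add]
  have hPu0 : P *ᵥ u0 = u0 := by
    rw [hP, Pmat, sum_mulVec', Finset.sum_range_succ]
    have h1 : ∀ i ∈ Finset.range l, (X ^ i * Emat X l l0 j * X ^ (l - i)) *ᵥ u0 = 0 := by
      intro i hi
      rw [Finset.mem_range] at hi
      rw [← Matrix.mulVec_mulVec, ← Matrix.mulVec_mulVec, hXau0]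
      have : Emat X l l0 j *ᵥ (fun i1 => (X ^ (l - i + l)) i1 l0) = 0 := by
        rw [Emat, EmulVec]
        have : (X ^ (l - i + l)) j l0 = 0 := by
          rw [Xpow_zero_of_ge X l hXl1 (by omega)]; simp
        rw [this, mul_zero, zero_smul]
      rw [this, Matrix.mulVec_zero]
    rw [Finset.sum_eq_zero h1, zero_add]
    rw [← Matrix.mulVec_mulVec, ← Matrix.mulVec_mulVec, hXau0]
    have h2 : Emat X l l0 j *ᵥ (fun i1 => (X ^ (l - l + l)) i1 l0) = Pi.single l0 (1:ℂ) := by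
      rw [Emat, EmulVec]
      have : (X ^ (l - l + l)) j l0 = (X ^ l) j l0 := by norm_num
      rw [this, inv_mul_cancel₀ hα, one_smul]
    rw [h2]
    ext i
    simp [hu0def]
  have hqu0 : q *ᵥ u0 = u0 := by
    rw [hq, qmat, sum_mulVec', Finset.sum_range_succ']
    have h1 : ∀ m ∈ Finset.range l, (sco X l l0 j (l - (m + 1)) • X ^ (m + 1)) *ᵥ u0 = 0 := by
      intro m hm
      rw [Matrix.smul_mulVec, hXau0]
      have : X ^ (m + 1 + l) = 0 := Xpow_zero_of_ge X l hXl1 (by omega)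
      rw [this]
      have h0 : (fun i => (0 : Matrix (Fin n) (Fin n) ℂ) i l0) = (0 : Fin n → ℂ) := by
        ext i; simp
      rw [h0, smul_zero]
    rw [Finset.sum_congr rfl h1, Finset.sum_const, smul_zero, zero_add, Nat.sub_zero,
      hsco_l, pow_zero, one_smul, Matrix.one_mulVec]
  have hqiu0 : qi *ᵥ u0 = u0 := by
    have h' : qi *ᵥ (q *ᵥ u0) = u0 := by
      rw [Matrix.mulVec_mulVec, hqiq, Matrix.one_mulVec]
    rw [hqu0] at h'
    exact h'
  have hP'u0 : P' *ᵥ u0 = u0 := by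
    rw [hP', ← Matrix.mulVec_mulVec, hPu0, hqiu0]
  -- the kernel vector x0
  obtain ⟨x0, hx0ne, hAx0⟩ : ∃ v, v ≠ 0 ∧
      (Matrix.of fun r c : Fin n => if (r : ℕ) ≤ l then (X ^ (r : ℕ)) j c else 0) *ᵥ v = 0 := by
    have hdet : (Matrix.of fun r c : Fin n => if (r : ℕ) ≤ l then (X ^ (r : ℕ)) j c else 0).det = 0 := by
      refine Matrix.det_eq_zero_of_row_eq_zero ⟨n - 1, by omega⟩ fun c => ?_
      have : ¬ ((n : ℕ) - 1 ≤ l) := by omega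
      simp [this]
    obtain ⟨v, hv, hv0⟩ := (Matrix.exists_mulVec_eq_zero_iff).2 hdet
    exact ⟨v, hv, hv0⟩
  have hx0 : ∀ a : ℕ, a ≤ l → (X ^ a *ᵥ x0) j = 0 := by
    intro a ha
    have han : a < n := by omega
    have := congrFun hAx0 ⟨a, han⟩
    simpa [Matrix.mulVec, dotProduct, ha] using this
  have hPx0 : P *ᵥ x0 = 0 := by
    rw [hP, Pmat, sum_mulVec']
    refine Finset.sum_eq_zero fun i hi => ?_
    rw [Finset.mem_range] at hi
    rw [← Matrix.mulVec_mulVec, ← Matrix.mulVec_mulVec]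
    have : Emat X l l0 j *ᵥ (X ^ (l - i) *ᵥ x0) = 0 := by
      rw [Emat, EmulVec, hx0 (l - i) (by omega), mul_zero, zero_smul]
    rw [this, Matrix.mulVec_zero]
  have hP'x0 : P' *ᵥ x0 = 0 := by
    rw [hP', ← Matrix.mulVec_mulVec, hPx0, Matrix.mulVec_zero]
  -- define Z
  refine ⟨(n : ℂ) • P' - P'.trace • 1, ?_, ?_, ?_, ?_⟩
  · obtain ⟨Pc, hPc1, hPc2⟩ := aux_diag P' idem (n : ℂ) (-P'.trace)
    refine ⟨Pc, hPc1, ?_⟩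
    have : (n : ℂ) • P' - P'.trace • 1 = (n : ℂ) • P' + (-P'.trace) • 1 := by
      rw [sub_eq_add_neg, neg_smul]
    rwa [this]
  · intro h
    rw [sub_eq_zero] at h
    have h1 : ((n : ℂ) • P') *ᵥ x0 = (Matrix.trace P' • (1 : Matrix (Fin n) (Fin n) ℂ)) *ᵥ x0 := by
      rw [h]
    rw [Matrix.smul_mulVec, Matrix.smul_mulVec, hP'x0, smul_zero,
      Matrix.one_mulVec] at h1
    have ht : Matrix.trace P' = 0 := by
      rcases smul_eq_zero.mp h1.symm with h' | h'
      · exact h'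
      · exact absurd h' hx0ne
    rw [ht, zero_smul] at h
    have h2 : ((n : ℂ) • P') *ᵥ u0 = 0 := by rw [h]; simp
    rw [Matrix.smul_mulVec, hP'u0] at h2
    rcases smul_eq_zero.mp h2 with h' | h'
    · exact (Nat.cast_ne_zero.mpr (by omega : n ≠ 0) : (n:ℂ) ≠ 0) h'
    · exact hu0ne h'
  · rw [Matrix.trace_sub, Matrix.trace_smul, Matrix.trace_smul, Matrix.trace_one]
    simp [Fintype.card_fin, mul_comm]
  · rw [mul_sub, sub_mul, Matrix.mul_smul, Matrix.smul_mul, hXP',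
      Matrix.mul_smul, Matrix.smul_mul, Matrix.mul_one, Matrix.one_mul]
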